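/- Let λ ∈ ℕ, λ ≥ 1, and m = 2λ + 1. Let a : ℤ → ℝ be a finitely supported mask and let φ : ℝ → ℝ be a continuous, compactly supported function satisfying φ(x) = Σ_{k∈ℤ} a_k φ(mx − k + 1/2) for all x ∈ ℝ, with |φ(x)| + |φ̂(x)| ≤ C(1 + |x|)^{−1−ε} for some C, ε > 0. Then φ(n) = δ_{0,n} for all n ∈ ℤ if and only if for every ω ∈ ℝ, writing z = e^{−πiω}, the identity 1/2 + Σ_{γ=0}^{m−1} Φ_{2,2γ+1}(z^m) = m z^{−1} ( A_{(m+1)/2}(z²)/2 + Σ_{γ=0}^{m−1} A_{m−γ}(z²) Φ_{2,2γ+1}(z) ) holds. -/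

import Mathlib

/-- The Fourier transform `φ̂(ω) = ∫ φ(x) e^{-2πixω} dx`. -/
noncomputable def fourierT (φ : ℝ → ℝ) (ω : ℝ) : ℂ :=
  ∫ x : ℝ, (φ x : ℂ) * Complex.exp (-(2 * (Real.pi : ℂ) * Complex.I * (x : ℂ) * (ω : ℂ)))

/-- The Laurent polynomial `Φ_{T,n}(z) = (1/T) Σ_k φ(mk + n/T) z^(mTk+n)`. -/
noncomputable def PhiSub (φ : ℝ → ℝ) (m T : ℕ) (n : ℤ) (z : ℂ) : ℂ :=
  (T : ℂ)⁻¹ * ∑ᶠ k : ℤ, (φ ((m : ℝ) * (k : ℝ) + (n : ℝ) / (T : ℝ)) : ℂ) * z ^ ((m : ℤ) * (T : ℤ) * k + n)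

/-- The sub-symbol `A_n(z) = (1/m) Σ_k a_{mk+n} z^(mk+n)` of the mask `a`
(notice `A_{n+m} = A_n`). -/
noncomputable def ASub (a : ℤ → ℝ) (m : ℕ) (n : ℤ) (z : ℂ) : ℂ :=
  (m : ℂ)⁻¹ * ∑ᶠ k : ℤ, (a ((m : ℤ) * k + n) : ℂ) * z ^ ((m : ℤ) * k + n)

open Function Finset

lemma finite_of_abs_le {M : Type*} [Zero M] (f : ℤ → M) (B : ℤ)
    (h : ∀ k, f k ≠ 0 → |k| ≤ B) : (Function.support f).Finite := by
  apply (Set.finite_Icc (-B) B).subset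
  intro k hk
  have h2 := h k hk
  rw [abs_le] at h2
  simpa using h2

lemma collapse {M : Type*} [AddCommMonoid M] (m : ℕ) (hm : 0 < m) (g : ℤ → M)
    (hg : (Function.support g).Finite) :
    ∑ γ ∈ Finset.range m, ∑ᶠ k : ℤ, g ((m : ℤ) * k + (γ : ℤ)) = ∑ᶠ j : ℤ, g j := by
  classical
  have hm' : (m : ℤ) ≠ 0 := by exact_mod_cast hm.ne'
  set S := hg.toFinset with hS
  set K : Finset ℤ := S.image (fun j => j / (m : ℤ)) with hK
  have hdiv : ∀ (k : ℤ) (γ : ℕ), γ < m → ((m:ℤ) * k + (γ:ℤ)) / (m:ℤ) = k := by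
    intro k γ hγ
    have h1 : (m:ℤ) * k + (γ:ℤ) = (γ:ℤ) + (m:ℤ) * k := by ring
    rw [h1, Int.add_mul_ediv_left _ _ hm']
    rw [Int.ediv_eq_zero_of_lt (by positivity) (by exact_mod_cast hγ)]
    ring
  have hmod : ∀ (k : ℤ) (γ : ℕ), γ < m → ((m:ℤ) * k + (γ:ℤ)) % (m:ℤ) = (γ:ℤ) := by
    intro k γ hγ
    have h1 : (m:ℤ) * k + (γ:ℤ) = (γ:ℤ) + (m:ℤ) * k := by ring
    rw [h1, Int.add_mul_emod_self_left, Int.emod_eq_of_lt (by positivity) (by exact_mod_cast hγ)]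
  have hinner : ∀ γ ∈ Finset.range m, ∑ᶠ k : ℤ, g ((m:ℤ) * k + (γ:ℤ)) = ∑ k ∈ K, g ((m:ℤ) * k + (γ:ℤ)) := by
    intro γ hγ
    rw [Finset.mem_range] at hγ
    apply finsum_eq_finset_sum_of_support_subset
    intro k hk
    have hmem : ((m:ℤ) * k + (γ:ℤ)) ∈ S := by
      rw [hS, Set.Finite.mem_toFinset]; exact hk
    simp only [hK, Finset.coe_image, Set.mem_image]
    exact ⟨_, by simpa using hmem, hdiv k γ hγ⟩
  rw [Finset.sum_congr rfl hinner]
  rw [← Finset.sum_product']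
  have hinj : ∀ p ∈ Finset.range m ×ˢ K, ∀ q ∈ Finset.range m ×ˢ K,
      (fun p : ℕ × ℤ => (m:ℤ) * p.2 + (p.1:ℤ)) p = (fun p : ℕ × ℤ => (m:ℤ) * p.2 + (p.1:ℤ)) q → p = q := by
    intro p hp q hq hpq
    simp only [Finset.mem_product, Finset.mem_range] at hp hq
    simp only at hpq
    have h1 : (p.1 : ℤ) = (q.1 : ℤ) := by
      have ha := hmod p.2 p.1 hp.1
      have hb := hmod q.2 q.1 hq.1
      rw [← ha, ← hb, hpq]
    have h1' : p.1 = q.1 := by exact_mod_cast h1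
    have h2 : p.2 = q.2 := by
      have : (m:ℤ) * p.2 = (m:ℤ) * q.2 := by omega
      exact mul_left_cancel₀ hm' this
    exact Prod.ext h1' h2
  have himage := Finset.sum_image (f := g) (s := Finset.range m ×ˢ K)
      (g := fun p : ℕ × ℤ => (m:ℤ) * p.2 + (p.1:ℤ)) hinj
  rw [← himage]
  symm
  apply finsum_eq_finset_sum_of_support_subset
  intro j hj
  have hjS : j ∈ S := by rw [hS, Set.Finite.mem_toFinset]; exact hj
  simp only [Finset.coe_image, Set.mem_image, Finset.mem_coe, Finset.mem_product]
  refine ⟨((j % (m:ℤ)).toNat, j / (m:ℤ)), ?_, ?_⟩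
  · constructor
    · rw [Finset.mem_range]
      have h0 : 0 ≤ j % (m:ℤ) := Int.emod_nonneg j hm'
      have h1 : j % (m:ℤ) < (m:ℤ) := Int.emod_lt_of_pos j (by exact_mod_cast hm)
      omega
    · rw [hK, Finset.mem_image]; exact ⟨j, hjS, rfl⟩
  · have h0 : 0 ≤ j % (m:ℤ) := Int.emod_nonneg j hm'
    have hcast : ((j % (m:ℤ)).toNat : ℤ) = j % (m:ℤ) := Int.toNat_of_nonneg h0
    simp only [hcast]
    exact Int.mul_ediv_add_emod j m

open Function Finset Polynomial

noncomputable def circPt (ω : ℝ) : ℂ := Complex.exp (-((Real.pi : ℂ) * Complex.I * (ω : ℂ)))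

lemma circPt_ne_zero (ω : ℝ) : circPt ω ≠ 0 := Complex.exp_ne_zero _

lemma circPt_injOn : Function.Injective (fun t : ℕ => circPt (1 / (t + 1 : ℝ))) := by
  intro t s h
  simp only [circPt] at h
  rw [Complex.exp_eq_exp_iff_exists_int] at h
  obtain ⟨n, hn⟩ := h
  set α : ℝ := 1 / (t + 1 : ℝ) with hα
  set β : ℝ := 1 / (s + 1 : ℝ) with hβ
  have hπ : (Real.pi : ℂ) ≠ 0 := by exact_mod_cast Real.pi_ne_zero
  have hI : Complex.I ≠ 0 := Complex.I_ne_zero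
  have key : ((β : ℂ) - (α : ℂ)) = 2 * (n : ℂ) := by
    have h2 : (Real.pi : ℂ) * Complex.I * ((β : ℂ) - (α : ℂ)) =
        (Real.pi : ℂ) * Complex.I * (2 * (n : ℂ)) := by
      rw [show (Real.pi:ℂ) * Complex.I * ((β:ℂ) - (α:ℂ))
          = -((Real.pi:ℂ) * Complex.I * (α:ℂ)) - (-((Real.pi:ℂ) * Complex.I * (β:ℂ))) by ring, hn]
      ring
    exact mul_left_cancel₀ (mul_ne_zero hπ hI) h2
  have keyR : β - α = 2 * (n : ℝ) := by exact_mod_cast key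
  have hα0 : 0 < α := by positivity
  have hβ0 : 0 < β := by positivity
  have hα1 : α ≤ 1 := by
    rw [hα]; rw [div_le_one (by positivity)]; linarith [Nat.cast_nonneg (α := ℝ) t]
  have hβ1 : β ≤ 1 := by
    rw [hβ]; rw [div_le_one (by positivity)]; linarith [Nat.cast_nonneg (α := ℝ) s]
  have hn0 : n = 0 := by
    by_contra hne
    have h1 : (1:ℤ) ≤ |2*n| := Int.one_le_abs (by omega)
    have h2n : (1 : ℝ) ≤ |2 * (n:ℝ)| := by
      calc (1:ℝ) ≤ ((|2*n| : ℤ) : ℝ) := by exact_mod_cast h1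
      _ = |((2*n : ℤ) : ℝ)| := by rw [Int.cast_abs]
      _ = |2*(n:ℝ)| := by push_cast; ring_nf
    rw [← keyR] at h2n
    have hlt : |β - α| < 1 := by
      rw [abs_sub_lt_iff]; constructor <;> linarith
    linarith
  rw [hn0] at keyR
  have hαβ : α = β := by push_cast at keyR; linarith
  rw [hα, hβ] at hαβ
  field_simp at hαβ
  have hts : (t:ℝ) = s := by linarith
  exact_mod_cast hts

/-- If a two-family "Laurent polynomial" with exponents `2mj` and `2mj+m` vanishes at
every point `circPt ω`, then all coefficients vanish. -/
lemma vanish_coeffs (m : ℕ) (hm : 0 < m) (c d : ℤ → ℂ) (S : Finset ℤ)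
    (hc : ∀ j, c j ≠ 0 → j ∈ S) (hd : ∀ j, d j ≠ 0 → j ∈ S)
    (h : ∀ ω : ℝ,
      ∑ j ∈ S, c j * (circPt ω) ^ (2 * (m:ℤ) * j) +
      ∑ j ∈ S, d j * (circPt ω) ^ (2 * (m:ℤ) * j + (m:ℤ)) = 0) :
    ∀ j, c j = 0 := by
  classical
  set B : ℕ := S.sup (fun j => j.natAbs) with hB
  have hbound : ∀ j ∈ S, |j| ≤ (B : ℤ) := by
    intro j hj
    have h2 : j.natAbs ≤ B := Finset.le_sup (f := fun j => j.natAbs) hj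
    rw [Int.abs_eq_natAbs]
    exact_mod_cast h2
  set N : ℕ := 2 * m * (B + 1) with hN
  have hE1 : ∀ j ∈ S, 0 ≤ 2 * (m:ℤ) * j + (N:ℤ) := by
    intro j hj
    have hb := hbound j hj
    rw [abs_le] at hb
    have hNe : (N:ℤ) = 2*(m:ℤ)*((B:ℤ)+1) := by rw [hN]; push_cast; ring
    have hmul : 2*(m:ℤ)*(-(B:ℤ)) ≤ 2*(m:ℤ)*j :=
      mul_le_mul_of_nonneg_left hb.1 (by positivity)
    have hm1 : (1:ℤ) ≤ (m:ℤ) := by exact_mod_cast hm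
    nlinarith
  have hE2 : ∀ j ∈ S, 0 ≤ 2 * (m:ℤ) * j + (m:ℤ) + (N:ℤ) := by
    intro j hj
    have h1 := hE1 j hj
    have h2 : (0:ℤ) ≤ (m:ℤ) := by positivity
    linarith
  set E1 : ℤ → ℕ := fun j => (2 * (m:ℤ) * j + (N:ℤ)).toNat with hE1d
  set E2 : ℤ → ℕ := fun j => (2 * (m:ℤ) * j + (m:ℤ) + (N:ℤ)).toNat with hE2d
  set p : Polynomial ℂ := (∑ j ∈ S, Polynomial.C (c j) * Polynomial.X ^ (E1 j)) +
      (∑ j ∈ S, Polynomial.C (d j) * Polynomial.X ^ (E2 j)) with hp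
  have hroot : ∀ t : ℕ, p.IsRoot (circPt (1 / (t + 1 : ℝ))) := by
    intro t
    set z := circPt (1 / (t + 1 : ℝ)) with hz
    have hz0 : z ≠ 0 := circPt_ne_zero _
    have heval : p.eval z = z ^ (N:ℤ) *
        (∑ j ∈ S, c j * z ^ (2 * (m:ℤ) * j) + ∑ j ∈ S, d j * z ^ (2 * (m:ℤ) * j + (m:ℤ))) := by
      rw [hp]
      simp only [Polynomial.eval_add, Polynomial.eval_finset_sum, Polynomial.eval_mul,
        Polynomial.eval_C, Polynomial.eval_pow, Polynomial.eval_X]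
      rw [mul_add, Finset.mul_sum, Finset.mul_sum]
      congr 1
      · apply Finset.sum_congr rfl
        intro j hj
        have : (z : ℂ) ^ (E1 j) = z ^ ((E1 j : ℤ)) := (zpow_natCast z (E1 j)).symm
        rw [this, hE1d]
        simp only []
        rw [Int.toNat_of_nonneg (hE1 j hj), zpow_add₀ hz0]
        ring
      · apply Finset.sum_congr rfl
        intro j hj
        have : (z : ℂ) ^ (E2 j) = z ^ ((E2 j : ℤ)) := (zpow_natCast z (E2 j)).symm
        rw [this, hE2d]
        simp only []
        rw [Int.toNat_of_nonneg (hE2 j hj), zpow_add₀ hz0]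
        ring
    rw [Polynomial.IsRoot, heval, h, mul_zero]
  have hp0 : p = 0 := by
    apply Polynomial.eq_zero_of_infinite_isRoot
    apply Set.infinite_of_injective_forall_mem (f := fun t : ℕ => circPt (1 / (t + 1 : ℝ)))
      circPt_injOn
    intro t
    exact hroot t
  intro j₀
  by_contra hc0
  have hj₀ : j₀ ∈ S := hc j₀ hc0
  have hcoeff : p.coeff (E1 j₀) = c j₀ := by
    rw [hp]
    rw [Polynomial.coeff_add, Polynomial.finset_sum_coeff, Polynomial.finset_sum_coeff]
    have h1 : ∑ j ∈ S, (Polynomial.C (c j) * Polynomial.X ^ (E1 j)).coeff (E1 j₀) = c j₀ := by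
      rw [Finset.sum_eq_single j₀]
      · simp [Polynomial.coeff_C_mul, Polynomial.coeff_X_pow]
      · intro j hj hne
        simp only [Polynomial.coeff_C_mul, Polynomial.coeff_X_pow]
        rw [if_neg, mul_zero]
        intro hEq
        apply hne
        have : 2 * (m:ℤ) * j₀ + (N:ℤ) = 2 * (m:ℤ) * j + (N:ℤ) := by
          have a1 := Int.toNat_of_nonneg (hE1 j hj)
          have a2 := Int.toNat_of_nonneg (hE1 j₀ hj₀)
          rw [hE1d] at hEq
          simp only [] at hEq
          omega
        have hm' : (m:ℤ) ≠ 0 := by exact_mod_cast hm.ne'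
        have h4 : (m:ℤ) * (2 * j₀) = (m:ℤ) * (2 * j) := by linarith
        have := mul_left_cancel₀ hm' h4
        omega
      · intro h; exact absurd hj₀ h
    have h2 : ∑ j ∈ S, (Polynomial.C (d j) * Polynomial.X ^ (E2 j)).coeff (E1 j₀) = 0 := by
      apply Finset.sum_eq_zero
      intro j hj
      simp only [Polynomial.coeff_C_mul, Polynomial.coeff_X_pow]
      rw [if_neg, mul_zero]
      intro hEq
      have : 2 * (m:ℤ) * j₀ + (N:ℤ) = 2 * (m:ℤ) * j + (m:ℤ) + (N:ℤ) := by
        have a1 := Int.toNat_of_nonneg (hE2 j hj)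
        have a2 := Int.toNat_of_nonneg (hE1 j₀ hj₀)
        rw [hE1d, hE2d] at hEq
        simp only [] at hEq
        omega
      have hm' : (m:ℤ) ≠ 0 := by exact_mod_cast hm.ne'
      have h4 : (m:ℤ) * (2 * j₀) = (m:ℤ) * (2 * j + 1) := by linarith
      have := mul_left_cancel₀ hm' h4
      omega
    rw [h1, h2, add_zero]
  rw [hp0] at hcoeff
  simp at hcoeff
  exact hc0 hcoeff.symm

lemma SL1 (m : ℕ) (hm0 : 0 < m) (φ : ℝ → ℝ) (Rb : ℕ)
    (hφhalf : ∀ s : ℤ, φ ((s:ℝ) + 1/2) ≠ 0 → |s| ≤ (Rb:ℤ))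
    (z : ℂ) :
    ∑ γ ∈ Finset.range m, PhiSub φ m 2 (2 * (γ:ℤ) + 1) (z ^ m) =
      2⁻¹ * ∑ᶠ j : ℤ, (φ ((j:ℝ) + 1/2) : ℂ) * z ^ (2 * (m:ℤ) * j + (m:ℤ)) := by
  classical
  set g : ℤ → ℂ := fun j => (φ ((j:ℝ) + 1/2) : ℂ) * z ^ (2 * (m:ℤ) * j + (m:ℤ)) with hg
  have hgfin : (Function.support g).Finite := by
    apply finite_of_abs_le _ (Rb:ℤ)
    intro k hk
    apply hφhalf
    intro h0
    apply hk
    show (φ ((k:ℝ) + 1/2) : ℂ) * z ^ (2 * (m:ℤ) * k + (m:ℤ)) = 0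
    rw [h0]
    simp
  have step : ∀ γ ∈ Finset.range m, PhiSub φ m 2 (2 * (γ:ℤ) + 1) (z ^ m)
      = 2⁻¹ * ∑ᶠ k : ℤ, g ((m:ℤ) * k + (γ:ℤ)) := by
    intro γ hγ
    rw [Finset.mem_range] at hγ
    rw [PhiSub]
    have hc : (((2:ℕ)):ℂ)⁻¹ = (2:ℂ)⁻¹ := by norm_num
    rw [hc]
    congr 1
    apply finsum_congr
    intro k
    rw [hg]
    simp only []
    have harg : (m:ℝ) * (k:ℝ) + ((2 * (γ:ℤ) + 1 : ℤ):ℝ) / ((2:ℕ):ℝ)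
        = (((m:ℤ) * k + (γ:ℤ) : ℤ) : ℝ) + 1/2 := by push_cast; ring
    rw [harg]
    congr 1
    rw [← zpow_natCast z m, ← zpow_mul]
    congr 1
    push_cast
    ring
  rw [Finset.sum_congr rfl step, ← Finset.mul_sum, collapse m hm0 g hgfin]

lemma P1 (lam m : ℕ) (hm : m = 2 * lam + 1) (a : ℤ → ℝ) (Ab : ℕ)
    (haf : ∀ k : ℤ, a k ≠ 0 → |k| ≤ (Ab:ℤ))
    (z : ℂ) (hz : z ≠ 0) :
    (m:ℂ) * z⁻¹ * (ASub a m ((lam:ℤ) + 1) (z ^ 2) / 2) =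
      2⁻¹ * ∑ᶠ k : ℤ, (a ((m:ℤ) * k + ((lam:ℤ) + 1)) : ℂ) * z ^ (2 * (m:ℤ) * k + (m:ℤ)) := by
  have hm0 : 0 < m := by omega
  have hmC : (m:ℂ) ≠ 0 := by exact_mod_cast hm0.ne'
  have hmZ : (m:ℤ) = 2 * (lam:ℤ) + 1 := by exact_mod_cast hm
  have hfin : (Function.support fun k : ℤ =>
      (a ((m:ℤ) * k + ((lam:ℤ) + 1)) : ℂ) * z ^ (2 * (m:ℤ) * k + (m:ℤ))).Finite := by
    apply finite_of_abs_le _ ((Ab:ℤ) + m)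
    intro k hk
    have h1 : a ((m:ℤ) * k + ((lam:ℤ) + 1)) ≠ 0 := by
      intro h0
      apply hk
      show (a ((m:ℤ) * k + ((lam:ℤ) + 1)) : ℂ) * z ^ (2 * (m:ℤ) * k + (m:ℤ)) = 0
      rw [h0]; simp
    have h2 := haf _ h1
    have hm1 : (1:ℤ) ≤ (m:ℤ) := by exact_mod_cast hm0
    have h3 : |(m:ℤ) * k| ≤ |(m:ℤ) * k + ((lam:ℤ) + 1)| + |(lam:ℤ) + 1| := by
      calc |(m:ℤ) * k| = |((m:ℤ) * k + ((lam:ℤ) + 1)) + (-((lam:ℤ) + 1))| := by congr 1; ring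
      _ ≤ |(m:ℤ) * k + ((lam:ℤ) + 1)| + |(-((lam:ℤ) + 1))| := abs_add_le _ _
      _ = |(m:ℤ) * k + ((lam:ℤ) + 1)| + |(lam:ℤ) + 1| := by rw [abs_neg]
    have hl : |(lam:ℤ) + 1| = (lam:ℤ) + 1 := abs_of_nonneg (by positivity)
    have h5 : (lam:ℤ) + 1 ≤ (m:ℤ) := by omega
    have h4 : |(m:ℤ) * k| = (m:ℤ) * |k| := by
      rw [abs_mul, abs_of_nonneg (by positivity : (0:ℤ) ≤ (m:ℤ))]
    nlinarith [abs_nonneg k, le_abs_self k]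
  rw [ASub]
  have hbody : ∀ k : ℤ, (a ((m:ℤ) * k + ((lam:ℤ) + 1)) : ℂ) * (z ^ 2) ^ ((m:ℤ) * k + ((lam:ℤ) + 1))
      = ((a ((m:ℤ) * k + ((lam:ℤ) + 1)) : ℂ) * z ^ (2 * (m:ℤ) * k + (m:ℤ))) * z := by
    intro k
    rw [← zpow_natCast z 2, ← zpow_mul]
    have hexp : (((2:ℕ)):ℤ) * ((m:ℤ) * k + ((lam:ℤ) + 1)) = (2 * (m:ℤ) * k + (m:ℤ)) + 1 := by
      rw [hmZ]; push_cast; ring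
    rw [hexp, zpow_add₀ hz, zpow_one]
    ring
  rw [finsum_congr hbody, ← finsum_mul' _ _ hfin]
  field_simp

lemma int_abs_add_bound {x c D : ℤ} (h : |x + c| ≤ D) : |x| ≤ D + |c| := by
  have h1 : |x| ≤ |x + c| + |c| := by
    calc |x| = |(x + c) + (-c)| := by congr 1; ring
    _ ≤ |x + c| + |(-c)| := abs_add_le _ _
    _ = |x + c| + |c| := by rw [abs_neg]
  omega

lemma int_abs_of_mul_le (m : ℕ) (hm0 : 0 < m) {k B : ℤ} (h : |(m:ℤ) * k| ≤ B) : |k| ≤ B := by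
  have h4 : |(m:ℤ) * k| = (m:ℤ) * |k| := by
    rw [abs_mul, abs_of_nonneg (by positivity : (0:ℤ) ≤ (m:ℤ))]
  have hm1 : (1:ℤ) ≤ (m:ℤ) := by exact_mod_cast hm0
  nlinarith [abs_nonneg k]

lemma P2 (lam m : ℕ) (hm : m = 2 * lam + 1) (a : ℤ → ℝ) (φ : ℝ → ℝ) (Ab Rb : ℕ)
    (haf : ∀ k : ℤ, a k ≠ 0 → |k| ≤ (Ab:ℤ))
    (hφhalf : ∀ s : ℤ, φ ((s:ℝ) + 1/2) ≠ 0 → |s| ≤ (Rb:ℤ))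
    (hφint : ∀ j : ℤ, φ (j:ℝ) ≠ 0 → |j| ≤ (Rb:ℤ))
    (hφm : ∀ (k : ℤ) (t : ℝ), 0 ≤ t → t ≤ (m:ℝ) → φ ((m:ℝ) * k + t) ≠ 0 → |k| ≤ (Rb:ℤ) + m)
    (hB : ∀ j : ℤ, φ (j:ℝ) = ∑ᶠ s : ℤ, a ((m:ℤ) * j - s) * φ ((s:ℝ) + 1/2))
    (z : ℂ) (hz : z ≠ 0) :
    (m:ℂ) * z⁻¹ * (∑ γ ∈ Finset.range m, ASub a m ((m:ℤ) - (γ:ℤ)) (z ^ 2) * PhiSub φ m 2 (2 * (γ:ℤ) + 1) z)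
      = 2⁻¹ * ∑ᶠ j : ℤ, (φ (j:ℝ) : ℂ) * z ^ (2 * (m:ℤ) * j) := by
  classical
  have hm0 : 0 < m := by omega
  have hmC : (m:ℂ) ≠ 0 := by exact_mod_cast hm0.ne'
  have hmZ : (m:ℤ) = 2 * (lam:ℤ) + 1 := by exact_mod_cast hm
  have hag : ∀ j s : ℤ, a ((m:ℤ) * j - s) ≠ 0 → |j| ≤ (Ab:ℤ) + |s| := by
    intro j s h
    have h1 := haf _ h
    have h2 : |(m:ℤ) * j| ≤ (Ab:ℤ) + |s| := by
      have h3 : |(m:ℤ) * j + (-s)| ≤ (Ab:ℤ) := by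
        rw [show (m:ℤ) * j + (-s) = (m:ℤ) * j - s by ring]; exact h1
      have := int_abs_add_bound h3
      rwa [abs_neg] at this
    exact int_abs_of_mul_le m hm0 h2
  set W : ℤ → ℂ := fun s => ∑ᶠ j : ℤ, (a ((m:ℤ) * j - s) : ℂ) * z ^ (2 * (m:ℤ) * j + 1) with hW
  set F : ℤ → ℂ := fun s => (φ ((s:ℝ) + 1/2) : ℂ) * W s with hF
  have hWfin : ∀ s : ℤ, (Function.support fun j : ℤ =>
      (a ((m:ℤ) * j - s) : ℂ) * z ^ (2 * (m:ℤ) * j + 1)).Finite := by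
    intro s
    apply finite_of_abs_le _ ((Ab:ℤ) + |s|)
    intro j hj
    apply hag
    intro h0
    apply hj
    show (a ((m:ℤ) * j - s) : ℂ) * z ^ (2 * (m:ℤ) * j + 1) = 0
    rw [h0]; simp
  have hFfin : (Function.support F).Finite := by
    apply finite_of_abs_le _ (Rb:ℤ)
    intro s hs
    apply hφhalf
    intro h0
    apply hs
    rw [hF]
    show (φ ((s:ℝ) + 1/2) : ℂ) * W s = 0
    rw [h0]; simp
  -- support of the a-side function, per γ
  have hfa : ∀ γ : ℕ, γ < m → (Function.support fun k : ℤ =>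
      (a ((m:ℤ) * k + ((m:ℤ) - (γ:ℤ))) : ℂ) * (z ^ 2) ^ ((m:ℤ) * k + ((m:ℤ) - (γ:ℤ)))).Finite := by
    intro γ hγ
    apply finite_of_abs_le _ ((Ab:ℤ) + m)
    intro k hk
    have h1 : a ((m:ℤ) * k + ((m:ℤ) - (γ:ℤ))) ≠ 0 := by
      intro h0; apply hk
      show (a ((m:ℤ) * k + ((m:ℤ) - (γ:ℤ))) : ℂ) * (z ^ 2) ^ ((m:ℤ) * k + ((m:ℤ) - (γ:ℤ))) = 0
      rw [h0]; simp
    have h2 := int_abs_add_bound (haf _ h1)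
    have h3 : |(m:ℤ) - (γ:ℤ)| ≤ (m:ℤ) := by
      rw [abs_of_nonneg (by omega : (0:ℤ) ≤ (m:ℤ) - (γ:ℤ))]; omega
    exact int_abs_of_mul_le m hm0 (by omega)
  -- support of the φ-side function, per γ
  have hfφ : ∀ γ : ℕ, γ < m → (Function.support fun l : ℤ =>
      (φ ((m:ℝ) * (l:ℝ) + ((2 * (γ:ℤ) + 1 : ℤ) : ℝ) / ((2:ℕ) : ℝ)) : ℂ) *
        z ^ ((m:ℤ) * ((2:ℕ):ℤ) * l + (2 * (γ:ℤ) + 1))).Finite := by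
    intro γ hγ
    apply finite_of_abs_le _ ((Rb:ℤ) + m)
    intro l hl
    apply hφm l (((2 * (γ:ℤ) + 1 : ℤ) : ℝ) / ((2:ℕ) : ℝ))
    · positivity
    · rw [div_le_iff₀ (by norm_num : (0:ℝ) < ((2:ℕ):ℝ))]
      push_cast
      have : (γ:ℝ) ≤ (m:ℝ) - 1 := by
        have : (γ:ℝ) + 1 ≤ (m:ℝ) := by exact_mod_cast hγ
        linarith
      linarith
    · intro h0
      apply hl
      show (φ ((m:ℝ) * (l:ℝ) + ((2 * (γ:ℤ) + 1 : ℤ) : ℝ) / ((2:ℕ) : ℝ)) : ℂ) * _ = 0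
      rw [h0]; simp
  -- Step C1
  have C1 : ∀ γ ∈ Finset.range m, ASub a m ((m:ℤ) - (γ:ℤ)) (z ^ 2) * PhiSub φ m 2 (2 * (γ:ℤ) + 1) z
      = (m:ℂ)⁻¹ * 2⁻¹ * ∑ᶠ l : ℤ, F ((m:ℤ) * l + (γ:ℤ)) := by
    intro γ hγ
    rw [Finset.mem_range] at hγ
    rw [ASub, PhiSub]
    rw [mul_mul_mul_comm]
    have hc : (((2:ℕ)):ℂ)⁻¹ = (2:ℂ)⁻¹ := by norm_num
    rw [hc]
    congr 1
    rw [mul_finsum' _ _ (hfφ γ hγ)]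
    apply finsum_congr
    intro l
    rw [finsum_mul' _ _ (hfa γ hγ)]
    have hFl : F ((m:ℤ) * l + (γ:ℤ)) = ∑ᶠ j : ℤ,
        (φ (((((m:ℤ) * l + (γ:ℤ)) : ℤ) : ℝ) + 1/2) : ℂ) *
          ((a ((m:ℤ) * j - ((m:ℤ) * l + (γ:ℤ))) : ℂ) * z ^ (2 * (m:ℤ) * j + 1)) := by
      rw [hF]
      show (φ (((((m:ℤ) * l + (γ:ℤ)) : ℤ) : ℝ) + 1/2) : ℂ) * W ((m:ℤ) * l + (γ:ℤ)) = _
      rw [hW]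
      exact mul_finsum' _ _ (hWfin ((m:ℤ) * l + (γ:ℤ)))
    rw [hFl]
    calc (∑ᶠ k : ℤ, ((a ((m:ℤ) * k + ((m:ℤ) - (γ:ℤ))) : ℂ) * (z ^ 2) ^ ((m:ℤ) * k + ((m:ℤ) - (γ:ℤ)))) *
          ((φ ((m:ℝ) * (l:ℝ) + ((2 * (γ:ℤ) + 1 : ℤ) : ℝ) / ((2:ℕ) : ℝ)) : ℂ) *
            z ^ ((m:ℤ) * ((2:ℕ):ℤ) * l + (2 * (γ:ℤ) + 1))))
        = ∑ᶠ k : ℤ, (φ (((((m:ℤ) * l + (γ:ℤ)) : ℤ) : ℝ) + 1/2) : ℂ) * ((a ((m:ℤ) * (k + (l + 1)) - ((m:ℤ) * l + (γ:ℤ))) : ℂ) * z ^ (2 * (m:ℤ) * (k + (l + 1)) + 1)) := by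
          apply finsum_congr
          intro k
          have hidx : (m:ℤ) * (k + (l + 1)) - ((m:ℤ) * l + (γ:ℤ)) = (m:ℤ) * k + ((m:ℤ) - (γ:ℤ)) := by ring
          have hargφ : (m:ℝ) * (l:ℝ) + ((2 * (γ:ℤ) + 1 : ℤ) : ℝ) / ((2:ℕ) : ℝ)
              = ((((m:ℤ) * l + (γ:ℤ)) : ℤ) : ℝ) + 1/2 := by push_cast; ring
          have hpow : (z ^ 2) ^ ((m:ℤ) * k + ((m:ℤ) - (γ:ℤ))) * z ^ ((m:ℤ) * ((2:ℕ):ℤ) * l + (2 * (γ:ℤ) + 1))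
              = z ^ (2 * (m:ℤ) * (k + (l + 1)) + 1) := by
            rw [← zpow_natCast z 2, ← zpow_mul, ← zpow_add₀ hz]
            congr 1
            push_cast
            ring
          rw [hidx, hargφ, ← hpow]
          ring
      _ = ∑ᶠ k : ℤ, (φ (((((m:ℤ) * l + (γ:ℤ)) : ℤ) : ℝ) + 1/2) : ℂ) * ((a ((m:ℤ) * ((Equiv.addRight (l + 1)) k) - ((m:ℤ) * l + (γ:ℤ))) : ℂ) * z ^ (2 * (m:ℤ) * ((Equiv.addRight (l + 1)) k) + 1)) := finsum_congr (fun k => rfl)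
      _ = ∑ᶠ j : ℤ, (φ (((((m:ℤ) * l + (γ:ℤ)) : ℤ) : ℝ) + 1/2) : ℂ) * ((a ((m:ℤ) * j - ((m:ℤ) * l + (γ:ℤ))) : ℂ) * z ^ (2 * (m:ℤ) * j + 1)) := finsum_comp_equiv (Equiv.addRight (l + 1)) (f := fun j : ℤ => (φ (((((m:ℤ) * l + (γ:ℤ)) : ℤ) : ℝ) + 1/2) : ℂ) * ((a ((m:ℤ) * j - ((m:ℤ) * l + (γ:ℤ))) : ℂ) * z ^ (2 * (m:ℤ) * j + 1)))
  rw [Finset.sum_congr rfl C1, ← Finset.mul_sum, collapse m hm0 F hFfin]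
  -- swap double sum
  have hfin3 : (Function.support fun j : ℤ => (φ (j:ℝ) : ℂ) * z ^ (2 * (m:ℤ) * j)).Finite := by
    apply finite_of_abs_le _ (Rb:ℤ)
    intro j hj
    apply hφint
    intro h0
    apply hj
    show (φ (j:ℝ) : ℂ) * z ^ (2 * (m:ℤ) * j) = 0
    rw [h0]; simp
  have hfin2 : (Function.support fun j : ℤ => (φ (j:ℝ) : ℂ) * z ^ (2 * (m:ℤ) * j + 1)).Finite := by
    apply finite_of_abs_le _ (Rb:ℤ)
    intro j hj
    apply hφint
    intro h0
    apply hj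
    show (φ (j:ℝ) : ℂ) * z ^ (2 * (m:ℤ) * j + 1) = 0
    rw [h0]; simp
  have hswap : ∑ᶠ s : ℤ, F s = ∑ᶠ j : ℤ, (φ (j:ℝ) : ℂ) * z ^ (2 * (m:ℤ) * j + 1) := by
    set Sφf : Finset ℤ := Finset.Icc (-(Rb:ℤ)) (Rb:ℤ) with hSφf
    set Jf : Finset ℤ := Finset.Icc (-((Ab:ℤ) + (Rb:ℤ))) ((Ab:ℤ) + (Rb:ℤ)) with hJf
    have h1 : ∑ᶠ s : ℤ, F s = ∑ s ∈ Sφf, F s := by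
      apply finsum_eq_finset_sum_of_support_subset
      intro s hs
      have h2 : φ ((s:ℝ) + 1/2) ≠ 0 := by
        intro h0
        apply hs
        rw [hF]
        show (φ ((s:ℝ) + 1/2) : ℂ) * W s = 0
        rw [h0]; simp
      have h3 := hφhalf s h2
      rw [abs_le] at h3
      simp only [hSφf, Finset.coe_Icc, Set.mem_Icc]
      exact h3
    have h2 : ∀ s ∈ Sφf, F s = ∑ j ∈ Jf,
        (φ ((s:ℝ) + 1/2) : ℂ) * ((a ((m:ℤ) * j - s) : ℂ) * z ^ (2 * (m:ℤ) * j + 1)) := by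
      intro s hs
      rw [hF]
      show (φ ((s:ℝ) + 1/2) : ℂ) * W s = _
      rw [hW]
      show (φ ((s:ℝ) + 1/2) : ℂ) * ∑ᶠ j : ℤ, (a ((m:ℤ) * j - s) : ℂ) * z ^ (2 * (m:ℤ) * j + 1) = _
      rw [mul_finsum' _ _ (hWfin s)]
      apply finsum_eq_finset_sum_of_support_subset
      intro j hj
      have hja : a ((m:ℤ) * j - s) ≠ 0 := by
        intro h0
        apply hj
        show (φ ((s:ℝ) + 1/2) : ℂ) * ((a ((m:ℤ) * j - s) : ℂ) * z ^ (2 * (m:ℤ) * j + 1)) = 0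
        rw [h0]; simp
      have hjb := hag j s hja
      have hsb : |s| ≤ (Rb:ℤ) := by
        simp only [hSφf, Finset.mem_Icc] at hs
        rw [abs_le]; exact hs
      simp only [hJf, Finset.coe_Icc, Set.mem_Icc]
      rw [abs_le] at hjb
      constructor <;> [omega; omega]
    rw [h1, Finset.sum_congr rfl h2, Finset.sum_comm]
    have h3 : ∀ j ∈ Jf, (∑ s ∈ Sφf,
        (φ ((s:ℝ) + 1/2) : ℂ) * ((a ((m:ℤ) * j - s) : ℂ) * z ^ (2 * (m:ℤ) * j + 1)))
        = (φ (j:ℝ) : ℂ) * z ^ (2 * (m:ℤ) * j + 1) := by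
      intro j hj
      have hre : ∀ s ∈ Sφf, (φ ((s:ℝ) + 1/2) : ℂ) * ((a ((m:ℤ) * j - s) : ℂ) * z ^ (2 * (m:ℤ) * j + 1))
          = ((a ((m:ℤ) * j - s) * φ ((s:ℝ) + 1/2) : ℝ) : ℂ) * z ^ (2 * (m:ℤ) * j + 1) := by
        intro s _
        push_cast
        ring
      rw [Finset.sum_congr rfl hre, ← Finset.sum_mul]
      congr 1
      have hr : φ (j:ℝ) = ∑ s ∈ Sφf, a ((m:ℤ) * j - s) * φ ((s:ℝ) + 1/2) := by
        rw [hB j]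
        apply finsum_eq_finset_sum_of_support_subset
        intro s hs
        have h4 : φ ((s:ℝ) + 1/2) ≠ 0 := by
          intro h0
          apply hs
          show a ((m:ℤ) * j - s) * φ ((s:ℝ) + 1/2) = 0
          rw [h0]; simp
        have h5 := hφhalf s h4
        rw [abs_le] at h5
        simp only [hSφf, Finset.coe_Icc, Set.mem_Icc]
        exact h5
      rw [hr]
      push_cast
      ring
    rw [Finset.sum_congr rfl h3]
    symm
    apply finsum_eq_finset_sum_of_support_subset
    intro j hj
    have h4 : φ (j:ℝ) ≠ 0 := by
      intro h0
      apply hj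
      show (φ (j:ℝ) : ℂ) * z ^ (2 * (m:ℤ) * j + 1) = 0
      rw [h0]; simp
    have h5 := hφint j h4
    rw [abs_le] at h5
    simp only [hJf, Finset.coe_Icc, Set.mem_Icc]
    omega
  rw [hswap]
  have hlast : ∑ᶠ j : ℤ, (φ (j:ℝ) : ℂ) * z ^ (2 * (m:ℤ) * j + 1)
      = z * ∑ᶠ j : ℤ, (φ (j:ℝ) : ℂ) * z ^ (2 * (m:ℤ) * j) := by
    rw [mul_finsum' _ _ hfin3]
    apply finsum_congr
    intro j
    rw [zpow_add₀ hz, zpow_one]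
    ring
  rw [hlast]
  field_simp


/-- Theorem 3.1, odd arity `m = 2λ+1`: `φ` is interpolatory iff
`1/2 + Σ_γ Φ_{2,2γ+1}(z^m) = m z⁻¹ (A_{(m+1)/2}(z²)/2 + Σ_γ A_{m-γ}(z²) Φ_{2,2γ+1}(z))`
for all `ω ∈ ℝ`, `z = e^{-πiω}`.  Here `(m+1)/2 = λ+1`. -/
theorem dual_interpolatory_characterization_odd
    (lam : ℕ) (hlam : 1 ≤ lam) (m : ℕ) (hm : m = 2 * lam + 1)
    (a : ℤ → ℝ) (ha : (Function.support a).Finite)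
    (φ : ℝ → ℝ) (hφc : Continuous φ) (hφs : HasCompactSupport φ)
    (href : ∀ x : ℝ, φ x = ∑ᶠ k : ℤ, a k * φ ((m : ℝ) * x - (k : ℝ) + 1 / 2))
    (hdecay : ∃ C ε : ℝ, 0 < C ∧ 0 < ε ∧
      ∀ x : ℝ, |φ x| + ‖fourierT φ x‖ ≤ C * (1 + |x|) ^ (-1 - ε)) :
    (∀ n : ℤ, φ (n : ℝ) = if n = 0 then 1 else 0) ↔
      (∀ ω : ℝ, ∀ z : ℂ, z = Complex.exp (-((Real.pi : ℂ) * Complex.I * (ω : ℂ))) →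
        1 / 2 + ∑ γ ∈ Finset.range m, PhiSub φ m 2 (2 * (γ : ℤ) + 1) (z ^ m) =
          (m : ℂ) * z⁻¹ *
            (ASub a m ((lam : ℤ) + 1) (z ^ 2) / 2 +
              ∑ γ ∈ Finset.range m,
                ASub a m ((m : ℤ) - (γ : ℤ)) (z ^ 2) * PhiSub φ m 2 (2 * (γ : ℤ) + 1) z)) := by
  classical
  have hm0 : 0 < m := by omega
  have hmZ : (m : ℤ) = 2 * (lam : ℤ) + 1 := by exact_mod_cast hm
  have hmR : (m : ℝ) = 2 * (lam : ℝ) + 1 := by exact_mod_cast hm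
  -- bound for the support of φ
  obtain ⟨Rb, hR⟩ : ∃ R : ℕ, ∀ x : ℝ, (R : ℝ) ≤ |x| → φ x = 0 := by
    obtain ⟨r, hr⟩ := hφs.isBounded.subset_closedBall 0
    refine ⟨⌈r⌉₊ + 1, ?_⟩
    intro x hx
    apply image_eq_zero_of_notMem_tsupport
    intro hmem
    have h1 := hr hmem
    rw [Metric.mem_closedBall, Real.dist_eq, sub_zero] at h1
    have h2 : ((⌈r⌉₊ : ℝ)) + 1 ≤ |x| := by push_cast at hx; linarith
    have h3 := Nat.le_ceil r
    linarith
  -- bound for the support of a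
  obtain ⟨Ab, haf⟩ : ∃ A : ℕ, ∀ k : ℤ, a k ≠ 0 → |k| ≤ (A : ℤ) := by
    refine ⟨ha.toFinset.sup (fun k => k.natAbs), ?_⟩
    intro k hk
    have h1 : k ∈ ha.toFinset := by rwa [Set.Finite.mem_toFinset]
    have h2 := Finset.le_sup (f := fun k : ℤ => k.natAbs) h1
    rw [Int.abs_eq_natAbs]
    exact_mod_cast h2
  have hφhalf : ∀ s : ℤ, φ ((s : ℝ) + 1 / 2) ≠ 0 → |s| ≤ (Rb : ℤ) := by
    intro s hs
    by_contra hcon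
    push_neg at hcon
    apply hs
    apply hR
    have h1 : (Rb : ℤ) + 1 ≤ |s| := hcon
    have h2 : ((Rb : ℝ)) + 1 ≤ |(s : ℝ)| := by
      have : ((|s| : ℤ) : ℝ) = |(s : ℝ)| := by push_cast; rfl
      rw [← this]; exact_mod_cast h1
    have h3 : |(s : ℝ)| ≤ |(s : ℝ) + 1 / 2| + 1 / 2 := by
      calc |(s : ℝ)| = |((s : ℝ) + 1 / 2) + (-(1 / 2))| := by congr 1; ring
      _ ≤ |(s : ℝ) + 1 / 2| + |(-(1 / 2 : ℝ))| := abs_add_le _ _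
      _ = |(s : ℝ) + 1 / 2| + 1 / 2 := by norm_num
    linarith
  have hφint : ∀ j : ℤ, φ (j : ℝ) ≠ 0 → |j| ≤ (Rb : ℤ) := by
    intro j hj
    by_contra hcon
    push_neg at hcon
    apply hj
    apply hR
    have h1 : (Rb : ℤ) + 1 ≤ |j| := hcon
    have h2 : ((Rb : ℝ)) + 1 ≤ |(j : ℝ)| := by
      have : ((|j| : ℤ) : ℝ) = |(j : ℝ)| := by push_cast; rfl
      rw [← this]; exact_mod_cast h1
    linarith
  have hφm : ∀ (k : ℤ) (t : ℝ), 0 ≤ t → t ≤ (m : ℝ) → φ ((m : ℝ) * k + t) ≠ 0 →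
      |k| ≤ (Rb : ℤ) + m := by
    intro k t ht0 htm hφ0
    by_contra hcon
    push_neg at hcon
    apply hφ0
    apply hR
    have h1 : (Rb : ℤ) + m + 1 ≤ |k| := hcon
    have h2 : ((Rb : ℝ)) + (m : ℝ) + 1 ≤ |(k : ℝ)| := by
      have hcast : ((|k| : ℤ) : ℝ) = |(k : ℝ)| := by push_cast; rfl
      rw [← hcast]; exact_mod_cast h1
    have hm1 : (1 : ℝ) ≤ (m : ℝ) := by exact_mod_cast hm0
    have h3 : |(m : ℝ) * k| ≤ |(m : ℝ) * k + t| + t := by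
      calc |(m : ℝ) * k| = |((m : ℝ) * k + t) + (-t)| := by congr 1; ring
      _ ≤ |(m : ℝ) * k + t| + |(-t)| := abs_add_le _ _
      _ = |(m : ℝ) * k + t| + t := by rw [abs_neg, abs_of_nonneg ht0]
    have h4 : |(m : ℝ) * k| = (m : ℝ) * |(k : ℝ)| := by
      rw [abs_mul, abs_of_nonneg (by positivity : (0:ℝ) ≤ (m : ℝ))]
    nlinarith
  -- refinement at the integers, reindexed
  have hB : ∀ j : ℤ, φ (j : ℝ) = ∑ᶠ s : ℤ, a ((m : ℤ) * j - s) * φ ((s : ℝ) + 1 / 2) := by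
    intro j
    rw [href (j : ℝ)]
    rw [← finsum_comp_equiv (Equiv.subLeft ((m : ℤ) * j))
      (f := fun k : ℤ => a k * φ ((m : ℝ) * (j : ℝ) - (k : ℝ) + 1 / 2))]
    apply finsum_congr
    intro s
    have he : (Equiv.subLeft ((m : ℤ) * j)) s = (m : ℤ) * j - s := rfl
    rw [he]
    have harg : (m : ℝ) * (j : ℝ) - (((m : ℤ) * j - s : ℤ) : ℝ) + 1 / 2 = (s : ℝ) + 1 / 2 := by
      push_cast; ring
    rw [harg]
  -- the key reformulation of the functional identity
  have KEY : ∀ z : ℂ, z ≠ 0 →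
      ((1 / 2 + ∑ γ ∈ Finset.range m, PhiSub φ m 2 (2 * (γ : ℤ) + 1) (z ^ m) =
          (m : ℂ) * z⁻¹ *
            (ASub a m ((lam : ℤ) + 1) (z ^ 2) / 2 +
              ∑ γ ∈ Finset.range m,
                ASub a m ((m : ℤ) - (γ : ℤ)) (z ^ 2) * PhiSub φ m 2 (2 * (γ : ℤ) + 1) z)) ↔
        (1 + ∑ᶠ j : ℤ, (φ ((j : ℝ) + 1 / 2) : ℂ) * z ^ (2 * (m : ℤ) * j + (m : ℤ))
          = (∑ᶠ k : ℤ, (a ((m : ℤ) * k + ((lam : ℤ) + 1)) : ℂ) * z ^ (2 * (m : ℤ) * k + (m : ℤ)))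
            + ∑ᶠ j : ℤ, (φ (j : ℝ) : ℂ) * z ^ (2 * (m : ℤ) * j))) := by
    intro z hz
    rw [SL1 m hm0 φ Rb hφhalf z, mul_add, P1 lam m hm a Ab haf z hz,
      P2 lam m hm a φ Ab Rb haf hφhalf hφint hφm hB z hz]
    constructor
    · intro h
      have h2 : (2 : ℂ)⁻¹ * (1 + ∑ᶠ j : ℤ, (φ ((j : ℝ) + 1 / 2) : ℂ) * z ^ (2 * (m : ℤ) * j + (m : ℤ)))
          = (2 : ℂ)⁻¹ * ((∑ᶠ k : ℤ, (a ((m : ℤ) * k + ((lam : ℤ) + 1)) : ℂ) * z ^ (2 * (m : ℤ) * k + (m : ℤ)))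
            + ∑ᶠ j : ℤ, (φ (j : ℝ) : ℂ) * z ^ (2 * (m : ℤ) * j)) := by
        linear_combination h
      exact mul_left_cancel₀ (by norm_num : (2 : ℂ)⁻¹ ≠ 0) h2
    · intro h
      linear_combination (2 : ℂ)⁻¹ * h
  constructor
  · -- forward direction
    intro hI ω z hzdef
    have hz : z ≠ 0 := by rw [hzdef]; exact Complex.exp_ne_zero _
    apply (KEY z hz).mpr
    have hAA : ∀ j : ℤ, φ ((j : ℝ) + 1 / 2) = a ((m : ℤ) * j + ((lam : ℤ) + 1)) := by
      intro j
      rw [href ((j : ℝ) + 1 / 2)]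
      rw [finsum_eq_single (fun k : ℤ => a k * φ ((m : ℝ) * ((j : ℝ) + 1 / 2) - (k : ℝ) + 1 / 2))
        ((m : ℤ) * j + ((lam : ℤ) + 1)) ?_]
      · have harg : (m : ℝ) * ((j : ℝ) + 1 / 2) - (((m : ℤ) * j + ((lam : ℤ) + 1) : ℤ) : ℝ) + 1 / 2
            = ((0 : ℤ) : ℝ) := by push_cast; rw [hmR]; ring
        show a ((m : ℤ) * j + ((lam : ℤ) + 1)) * φ _ = _
        rw [harg, hI 0, if_pos rfl, mul_one]
      · intro k hk
        have harg2 : (m : ℝ) * ((j : ℝ) + 1 / 2) - (k : ℝ) + 1 / 2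
            = (((m : ℤ) * j + ((lam : ℤ) + 1) - k : ℤ) : ℝ) := by push_cast; rw [hmR]; ring
        show a k * φ _ = 0
        rw [harg2, hI _, if_neg (by omega), mul_zero]
    have hSp : ∑ᶠ j : ℤ, (φ (j : ℝ) : ℂ) * z ^ (2 * (m : ℤ) * j) = 1 := by
      have h1 : ∀ j : ℤ, (φ (j : ℝ) : ℂ) * z ^ (2 * (m : ℤ) * j)
          = (fun j : ℤ => if j = 0 then z ^ (2 * (m : ℤ) * j) else 0) j := by
        intro j
        rw [hI j]
        by_cases h : j = 0 <;> simp [h]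
      rw [finsum_congr h1, finsum_eq_single _ 0 (fun b hb => by simp [hb])]
      simp
    have hSd : ∑ᶠ j : ℤ, (φ ((j : ℝ) + 1 / 2) : ℂ) * z ^ (2 * (m : ℤ) * j + (m : ℤ))
        = ∑ᶠ k : ℤ, (a ((m : ℤ) * k + ((lam : ℤ) + 1)) : ℂ) * z ^ (2 * (m : ℤ) * k + (m : ℤ)) := by
      apply finsum_congr
      intro j
      rw [hAA j]
    rw [hSd, hSp]
    ring
  · -- backward direction
    intro hID n
    set c : ℤ → ℂ := fun j => (if j = 0 then (1 : ℂ) else 0) - (φ (j : ℝ) : ℂ) with hcdef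
    set d : ℤ → ℂ := fun j => (φ ((j : ℝ) + 1 / 2) : ℂ) - (a ((m : ℤ) * j + ((lam : ℤ) + 1)) : ℂ)
      with hddef
    set S : Finset ℤ := Finset.Icc (-((Ab : ℤ) + (Rb : ℤ) + m)) ((Ab : ℤ) + (Rb : ℤ) + m) with hSdef
    have haint : ∀ j : ℤ, a ((m : ℤ) * j + ((lam : ℤ) + 1)) ≠ 0 → |j| ≤ (Ab : ℤ) + m := by
      intro j hj
      have h1 := int_abs_add_bound (haf _ hj)
      have h2 : |(lam : ℤ) + 1| = (lam : ℤ) + 1 := abs_of_nonneg (by positivity)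
      apply int_abs_of_mul_le m hm0
      omega
    have hcS : ∀ j, c j ≠ 0 → j ∈ S := by
      intro j hj
      rw [hSdef, Finset.mem_Icc]
      by_cases h0 : j = 0
      · subst h0; constructor <;> omega
      · have hφ0 : φ (j : ℝ) ≠ 0 := by
          intro hφz
          apply hj
          rw [hcdef]
          show (if j = 0 then (1 : ℂ) else 0) - (φ (j : ℝ) : ℂ) = 0
          rw [if_neg h0, hφz]
          simp
        have := hφint j hφ0
        rw [abs_le] at this
        omega
    have hdS : ∀ j, d j ≠ 0 → j ∈ S := by
      intro j hj
      rw [hSdef, Finset.mem_Icc]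
      by_cases hφ0 : φ ((j : ℝ) + 1 / 2) = 0
      · have ha0 : a ((m : ℤ) * j + ((lam : ℤ) + 1)) ≠ 0 := by
          intro haz
          apply hj
          rw [hddef]
          show (φ ((j : ℝ) + 1 / 2) : ℂ) - (a ((m : ℤ) * j + ((lam : ℤ) + 1)) : ℂ) = 0
          rw [hφ0, haz]
          simp
        have := haint j ha0
        rw [abs_le] at this
        omega
      · have := hφhalf j hφ0
        rw [abs_le] at this
        omega
    have hsum : ∀ ω : ℝ,
        ∑ j ∈ S, c j * (circPt ω) ^ (2 * (m : ℤ) * j) +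
        ∑ j ∈ S, d j * (circPt ω) ^ (2 * (m : ℤ) * j + (m : ℤ)) = 0 := by
      intro ω
      have hz : circPt ω ≠ 0 := circPt_ne_zero ω
      have hkey := (KEY (circPt ω) hz).mp (hID ω (circPt ω) rfl)
      set z := circPt ω
      have h1 : ∑ j ∈ S, c j * z ^ (2 * (m : ℤ) * j)
          = 1 - ∑ᶠ j : ℤ, (φ (j : ℝ) : ℂ) * z ^ (2 * (m : ℤ) * j) := by
        have hsplit : ∀ j ∈ S, c j * z ^ (2 * (m : ℤ) * j)
            = (if j = 0 then z ^ (2 * (m : ℤ) * j) else 0) - (φ (j : ℝ) : ℂ) * z ^ (2 * (m : ℤ) * j) := by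
          intro j _
          rw [hcdef]
          show ((if j = 0 then (1 : ℂ) else 0) - (φ (j : ℝ) : ℂ)) * z ^ (2 * (m : ℤ) * j) = _
          split_ifs with h
          · ring
          · ring
        rw [Finset.sum_congr rfl hsplit, Finset.sum_sub_distrib]
        congr 1
        · rw [Finset.sum_eq_single_of_mem 0 (by rw [hSdef, Finset.mem_Icc]; constructor <;> omega)]
          · simp
          · intro j _ hne
            rw [if_neg hne]
        · symm
          apply finsum_eq_finset_sum_of_support_subset
          intro j hj
          have hφ0 : φ (j : ℝ) ≠ 0 := by
            intro hφz
            apply hj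
            show (φ (j : ℝ) : ℂ) * z ^ (2 * (m : ℤ) * j) = 0
            rw [hφz]; simp
          have := hφint j hφ0
          rw [abs_le] at this
          rw [hSdef]
          simp only [Finset.coe_Icc, Set.mem_Icc]
          omega
      have h2 : ∑ j ∈ S, d j * z ^ (2 * (m : ℤ) * j + (m : ℤ))
          = (∑ᶠ j : ℤ, (φ ((j : ℝ) + 1 / 2) : ℂ) * z ^ (2 * (m : ℤ) * j + (m : ℤ)))
            - ∑ᶠ k : ℤ, (a ((m : ℤ) * k + ((lam : ℤ) + 1)) : ℂ) * z ^ (2 * (m : ℤ) * k + (m : ℤ)) := by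
        have hsplit : ∀ j ∈ S, d j * z ^ (2 * (m : ℤ) * j + (m : ℤ))
            = (φ ((j : ℝ) + 1 / 2) : ℂ) * z ^ (2 * (m : ℤ) * j + (m : ℤ))
              - (a ((m : ℤ) * j + ((lam : ℤ) + 1)) : ℂ) * z ^ (2 * (m : ℤ) * j + (m : ℤ)) := by
          intro j _
          rw [hddef]
          show ((φ ((j : ℝ) + 1 / 2) : ℂ) - (a ((m : ℤ) * j + ((lam : ℤ) + 1)) : ℂ)) *
            z ^ (2 * (m : ℤ) * j + (m : ℤ)) = _
          ring
        rw [Finset.sum_congr rfl hsplit, Finset.sum_sub_distrib]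
        congr 1
        · symm
          apply finsum_eq_finset_sum_of_support_subset
          intro j hj
          have hφ0 : φ ((j : ℝ) + 1 / 2) ≠ 0 := by
            intro hφz
            apply hj
            show (φ ((j : ℝ) + 1 / 2) : ℂ) * z ^ (2 * (m : ℤ) * j + (m : ℤ)) = 0
            rw [hφz]; simp
          have := hφhalf j hφ0
          rw [abs_le] at this
          rw [hSdef]
          simp only [Finset.coe_Icc, Set.mem_Icc]
          omega
        · symm
          apply finsum_eq_finset_sum_of_support_subset
          intro j hj
          have ha0 : a ((m : ℤ) * j + ((lam : ℤ) + 1)) ≠ 0 := by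
            intro haz
            apply hj
            show (a ((m : ℤ) * j + ((lam : ℤ) + 1)) : ℂ) * z ^ (2 * (m : ℤ) * j + (m : ℤ)) = 0
            rw [haz]; simp
          have := haint j ha0
          rw [abs_le] at this
          rw [hSdef]
          simp only [Finset.coe_Icc, Set.mem_Icc]
          omega
      rw [h1, h2]
      linear_combination hkey
    have hvan := vanish_coeffs m hm0 c d S hcS hdS hsum n
    rw [hcdef] at hvan
    have hvan2 : (φ (n : ℝ) : ℂ) = if n = 0 then (1 : ℂ) else 0 := by
      have : (if n = 0 then (1 : ℂ) else 0) - (φ (n : ℝ) : ℂ) = 0 := hvan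
      linear_combination -this
    by_cases h0 : n = 0
    · subst h0
      rw [if_pos rfl] at hvan2 ⊢
      exact_mod_cast hvan2
    · rw [if_neg h0] at hvan2 ⊢
      exact_mod_cast hvan2
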